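/- Let (Ω,𝒜,P) be a probability space, Y a nonnegative integrable random variable, and π a functional from the set of nonnegative integrable random variables to (−∞,∞] with the Fatou property: whenever X_k→X almost surely with 0≤X_k≤W for all k for some integrable W, then π(X) ≤ liminf_{k→∞} π(X_k). Then the map ℱ→(−∞,∞], f ↦ π(Y − f(Y)), is lower semicontinuous with respect to the topology of uniform convergence on compact sets on ℱ. -/
import Mathlib


open MeasureTheory Set NNReal Filter Topology

/-- The set `ℱ` of retained loss functions inside `C([0,∞),ℝ)` with the topology of
uniform convergence on compact sets. -/
def FSet : Set C(ℝ≥0, ℝ) :=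
  {f | (∀ t : ℝ≥0, 0 ≤ f t ∧ f t ≤ (t : ℝ)) ∧ Monotone (f : ℝ≥0 → ℝ) ∧
    Monotone (fun t : ℝ≥0 => (t : ℝ) - f t)}

/-- Let `Y` be a nonnegative integrable random variable and `π` a
functional on nonnegative integrable random variables with the Fatou property
(lower semicontinuity along dominated a.s.-convergent sequences). Then
`f ↦ π(Y - f(Y))` is lower semicontinuous on `ℱ` with respect to the topology of
uniform convergence on compact sets. -/
theorem reinsurance_premium_lsc {Ω : Type*} [MeasurableSpace Ω] (P : Measure Ω)
    [IsProbabilityMeasure P] (Y : Ω → ℝ≥0) (hYm : Measurable Y)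
    (hYi : Integrable (fun ω => (Y ω : ℝ)) P)
    (π : (Ω → ℝ) → EReal)
    (hfatou : ∀ (X : Ω → ℝ) (Xk : ℕ → Ω → ℝ) (W : Ω → ℝ), Integrable W P →
      (∀ k, ∀ᵐ ω ∂P, 0 ≤ Xk k ω ∧ Xk k ω ≤ W ω) →
      (∀ᵐ ω ∂P, Tendsto (fun k => Xk k ω) atTop (𝓝 (X ω))) →
      π X ≤ liminf (fun k => π (Xk k)) atTop) :
    LowerSemicontinuous
      (fun f : FSet => π (fun ω => (Y ω : ℝ) - (f : C(ℝ≥0, ℝ)) (Y ω))) := by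
  set F : FSet → EReal := fun f => π (fun ω => (Y ω : ℝ) - (f : C(ℝ≥0, ℝ)) (Y ω)) with hF
  intro f y hy
  by_contra h
  rw [Filter.not_eventually] at h
  have hcl : (f : FSet) ∈ closure {g : FSet | ¬ y < F g} := mem_closure_iff_frequently.2 h
  rcases mem_closure_iff_seq_limit.1 hcl with ⟨u, hu, hconv⟩
  -- each u k satisfies F (u k) ≤ y
  have hle : ∀ k, F (u k) ≤ y := fun k => not_lt.1 (hu k)
  -- pointwise convergence of u k to f
  have hptw : ∀ t : ℝ≥0, Tendsto (fun k => ((u k : C(ℝ≥0, ℝ)) t)) atTop (𝓝 ((f : C(ℝ≥0, ℝ)) t)) := by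
    intro t
    have hco : Tendsto (fun k => (u k : C(ℝ≥0, ℝ))) atTop (𝓝 (f : C(ℝ≥0, ℝ))) :=
      ((continuous_subtype_val.tendsto f).comp hconv)
    exact ((continuous_eval_const t).tendsto _).comp hco
  have key := hfatou (fun ω => (Y ω : ℝ) - (f : C(ℝ≥0, ℝ)) (Y ω))
      (fun k ω => (Y ω : ℝ) - (u k : C(ℝ≥0, ℝ)) (Y ω))
      (fun ω => (Y ω : ℝ)) hYi
      (by
        intro k
        filter_upwards with ω
        obtain ⟨h1, h2⟩ := (u k).2.1 (Y ω)
        constructor <;> linarith)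
      (by
        filter_upwards with ω
        exact (tendsto_const_nhds.sub (hptw (Y ω))))
  have hliminf : liminf (fun k => F (u k)) atTop ≤ y :=
    Filter.liminf_le_of_frequently_le' (Filter.Frequently.of_forall hle)
  exact absurd (lt_of_lt_of_le hy (key.trans hliminf)) (lt_irrefl _ ∘ fun h' => h'.trans_le le_rfl)
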